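/- Let n, D, T be positive integers, let Â^(1), …, Â^(T) be n×n real matrices (one per flow), and let g_1, …, g_T : (Fin D → ℝ) → (Fin D → ℝ) be everywhere differentiable maps. Given X : Matrix (Fin n) (Fin D) ℝ, define recursively X^(0) = X and, for j = 1,…,T, X̃^(j) = Â^(j) * X^(j−1) and X^(j) i = g_j (X̃^(j) i). Let F_j be the map X' ↦ (i ↦ g_j ((Â^(j) * X') i)) and let F = F_T ∘ ⋯ ∘ F_1. Then F is differentiable at X and |det (fderiv ℝ F X)| = ∏_{j=1}^{T} ( |det Â^(j)|^D · ∏_{i : Fin n} |det (fderiv ℝ g_j (X̃^(j) i))| ). -/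

import Mathlib

attribute [local instance] Matrix.normedAddCommGroup Matrix.normedSpace

lemma det_pi_aux {ι κ : Type*} [Fintype ι] [DecidableEq ι] [Fintype κ] [DecidableEq κ]
    (f : ι → ((κ → ℝ) →ₗ[ℝ] (κ → ℝ))) :
    LinearMap.det (LinearMap.pi fun i => (f i).comp (LinearMap.proj i)) =
      ∏ i, LinearMap.det (f i) := by
  classical
  let b : Module.Basis ((_ : ι) × κ) ℝ (ι → κ → ℝ) := Pi.basis fun _ : ι => Pi.basisFun ℝ κ
  rw [← LinearMap.det_toMatrix b]
  have hM : LinearMap.toMatrix b b (LinearMap.pi fun i => (f i).comp (LinearMap.proj i))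
      = (Matrix.blockDiagonal fun i =>
          LinearMap.toMatrix (Pi.basisFun ℝ κ) (Pi.basisFun ℝ κ) (f i)).submatrix
          (fun p : (_ : ι) × κ => (p.2, p.1)) (fun p => (p.2, p.1)) := by
    ext ⟨i, k⟩ ⟨j, l⟩
    rw [LinearMap.toMatrix_apply]
    simp only [b, Pi.basis_repr, Pi.basisFun_repr, LinearMap.pi_apply, LinearMap.comp_apply,
      LinearMap.proj_apply, Pi.basis_apply, Matrix.submatrix_apply, Matrix.blockDiagonal_apply,
      LinearMap.toMatrix_apply, Pi.basisFun_repr]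
    by_cases hij : i = j
    · subst hij
      simp [Pi.single_eq_same]
    · simp [Pi.single_eq_of_ne hij, hij]
  rw [hM]
  rw [show (fun p : (_ : ι) × κ => (p.2, p.1)) =
      ⇑((Equiv.sigmaEquivProd ι κ).trans (Equiv.prodComm ι κ)) from rfl,
    Matrix.det_submatrix_equiv_self, Matrix.det_blockDiagonal]
  exact Finset.prod_congr rfl fun i _ => LinearMap.det_toMatrix _ (f i)

/-- Left multiplication by `A` as a linear map on matrices. -/
def mulLeftLM {n D : ℕ} (A : Matrix (Fin n) (Fin n) ℝ) :
    Matrix (Fin n) (Fin D) ℝ →ₗ[ℝ] Matrix (Fin n) (Fin D) ℝ where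
  toFun X := A * X
  map_add' X Y := Matrix.mul_add A X Y
  map_smul' c X := Matrix.mul_smul A c X

lemma det_mulLeftLM {n D : ℕ} (A : Matrix (Fin n) (Fin n) ℝ) :
    LinearMap.det (mulLeftLM (D := D) A) = A.det ^ D := by
  classical
  let e : Matrix (Fin n) (Fin D) ℝ ≃ₗ[ℝ] (Fin D → Fin n → ℝ) :=
    { toFun := fun X k i => X i k
      invFun := fun Y i k => Y k i
      map_add' := fun _ _ => rfl
      map_smul' := fun _ _ => rfl
      left_inv := fun _ => rfl
      right_inv := fun _ => rfl }
  have key : mulLeftLM (D := D) A =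
      (e.symm : (Fin D → Fin n → ℝ) →ₗ[ℝ] Matrix (Fin n) (Fin D) ℝ) ∘ₗ
        (LinearMap.pi fun k : Fin D => (Matrix.toLin' A).comp (LinearMap.proj k)) ∘ₗ
        (e : Matrix (Fin n) (Fin D) ℝ →ₗ[ℝ] (Fin D → Fin n → ℝ)) := by
    apply LinearMap.ext; intro X
    funext i k
    simp [mulLeftLM, e, Matrix.mul_apply, Matrix.toLin'_apply, Matrix.mulVec, dotProduct]
    rfl
  rw [key]
  rw [show ((e.symm : (Fin D → Fin n → ℝ) →ₗ[ℝ] Matrix (Fin n) (Fin D) ℝ) ∘ₗ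
        (LinearMap.pi fun k : Fin D => (Matrix.toLin' A).comp (LinearMap.proj k)) ∘ₗ
        (e : Matrix (Fin n) (Fin D) ℝ →ₗ[ℝ] (Fin D → Fin n → ℝ))) =
      ((e.symm : (Fin D → Fin n → ℝ) →ₗ[ℝ] Matrix (Fin n) (Fin D) ℝ) ∘ₗ
        (LinearMap.pi fun k : Fin D => (Matrix.toLin' A).comp (LinearMap.proj k)) ∘ₗ
        ((e.symm).symm : Matrix (Fin n) (Fin D) ℝ →ₗ[ℝ] (Fin D → Fin n → ℝ))) from rfl,
    LinearMap.det_conj, det_pi_aux]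
  simp [LinearMap.det_toLin']

lemma step_lemma {n D : ℕ} (A : Matrix (Fin n) (Fin n) ℝ)
    (gj : (Fin D → ℝ) → (Fin D → ℝ)) (hgj : Differentiable ℝ gj)
    (Y : Matrix (Fin n) (Fin D) ℝ) :
    ∃ L : Matrix (Fin n) (Fin D) ℝ →L[ℝ] Matrix (Fin n) (Fin D) ℝ,
      HasFDerivAt (fun X' => Matrix.of fun i => gj ((A * X') i)) L Y ∧
        |LinearMap.det L.toLinearMap| =
          |A.det| ^ D * ∏ i, |LinearMap.det (fderiv ℝ gj ((A * Y) i)).toLinearMap| := by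
  classical
  let mulCLM : Matrix (Fin n) (Fin D) ℝ →L[ℝ] Matrix (Fin n) (Fin D) ℝ :=
    LinearMap.toContinuousLinearMap (mulLeftLM A)
  let rowCLM : Matrix (Fin n) (Fin D) ℝ →L[ℝ] Matrix (Fin n) (Fin D) ℝ :=
    ContinuousLinearMap.pi fun i =>
      (fderiv ℝ gj ((A * Y) i)).comp (ContinuousLinearMap.proj i)
  refine ⟨rowCLM.comp mulCLM, ?_, ?_⟩
  · have h1 : HasFDerivAt (fun X' : Matrix (Fin n) (Fin D) ℝ => A * X') mulCLM Y :=
      mulCLM.hasFDerivAt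
    have h2 : HasFDerivAt (fun (Z : Matrix (Fin n) (Fin D) ℝ) (i : Fin n) => gj (Z i))
        rowCLM (A * Y) := by
      apply hasFDerivAt_pi'.2
      intro i
      exact ((hgj ((A * Y) i)).hasFDerivAt).comp (A * Y) (hasFDerivAt_apply i (A * Y))
    exact h2.comp Y h1
  · have hco : (rowCLM.comp mulCLM).toLinearMap = rowCLM.toLinearMap ∘ₗ mulCLM.toLinearMap :=
      rfl
    rw [hco, LinearMap.det_comp, abs_mul]
    have hrow : (rowCLM : Matrix (Fin n) (Fin D) ℝ →ₗ[ℝ] Matrix (Fin n) (Fin D) ℝ) =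
        LinearMap.pi fun i =>
          ((fderiv ℝ gj ((A * Y) i)).toLinearMap).comp (LinearMap.proj i) := rfl
    have hmul : (mulCLM : Matrix (Fin n) (Fin D) ℝ →ₗ[ℝ] Matrix (Fin n) (Fin D) ℝ) =
        mulLeftLM A := rfl
    have h1 : LinearMap.det (LinearMap.pi fun i =>
        ((fderiv ℝ gj ((A * Y) i)).toLinearMap).comp (LinearMap.proj i)
          : Matrix (Fin n) (Fin D) ℝ →ₗ[ℝ] Matrix (Fin n) (Fin D) ℝ) =
        ∏ i, LinearMap.det (fderiv ℝ gj ((A * Y) i)).toLinearMap := det_pi_aux _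
    rw [hrow, hmul]
    erw [h1]
    rw [det_mulLeftLM, Finset.abs_prod, abs_pow, mul_comm]

/-- `iterFlowParam Ahat g j h X` is `(F_j ∘ F_{j-1} ∘ ⋯ ∘ F_1) X`, where the `k`-th constituent
flow `F_k` maps `X'` to the matrix whose `i`-th row is `g_k ((Ahat_k * X') i)`, each flow having
its own convolution matrix `Ahat_k`.  In particular `iterFlowParam Ahat g 0 _ X = X` (so
`X^(0) = X`) and `X^(j+1) i = g_{j+1} (X̃^(j+1) i)` with `X̃^(j+1) = Ahat_{j+1} * X^(j)`. -/
def iterFlowParam {n D T : ℕ} (Ahat : Fin T → Matrix (Fin n) (Fin n) ℝ)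
    (g : Fin T → (Fin D → ℝ) → (Fin D → ℝ)) :
    (j : ℕ) → j ≤ T → Matrix (Fin n) (Fin D) ℝ → Matrix (Fin n) (Fin D) ℝ
  | 0, _, X => X
  | j + 1, h, X =>
    Matrix.of fun i =>
      g ⟨j, h⟩ ((Ahat ⟨j, h⟩ * iterFlowParam Ahat g j (Nat.le_of_succ_le h) X) i)

/-- For the composite flow `F = F_T ∘ ⋯ ∘ F_1` with everywhere differentiable row maps
`g_1, …, g_T` and per-flow convolution matrices `Ahat^(1), …, Ahat^(T)`, `F` is
differentiable at `X` and
`|det (fderiv ℝ F X)| = ∏_{j=1}^T (|det Ahat^(j)|^D * ∏_i |det (fderiv ℝ g_j (X̃^(j) i))|)`,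
where `X̃^(j) = Ahat^(j) * X^(j-1)`. -/
theorem gcflow_full_det_param (n D T : ℕ) (hn : 0 < n) (hD : 0 < D) (hT : 0 < T)
    (Ahat : Fin T → Matrix (Fin n) (Fin n) ℝ)
    (g : Fin T → (Fin D → ℝ) → (Fin D → ℝ))
    (hg : ∀ j : Fin T, Differentiable ℝ (g j))
    (X : Matrix (Fin n) (Fin D) ℝ) :
    DifferentiableAt ℝ (iterFlowParam Ahat g T le_rfl) X ∧
      |LinearMap.det (fderiv ℝ (iterFlowParam Ahat g T le_rfl) X).toLinearMap| =
        ∏ j : Fin T,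
          (|(Ahat j).det| ^ D *
            ∏ i : Fin n,
              |LinearMap.det
                (fderiv ℝ (g j)
                  ((Ahat j * iterFlowParam Ahat g j.val (Nat.le_of_lt j.isLt) X) i)).toLinearMap|) := by
  classical
  set term' : ℕ → ℝ := fun k =>
    if hk : k < T then
      |(Ahat ⟨k, hk⟩).det| ^ D *
        ∏ i : Fin n,
          |LinearMap.det
            (fderiv ℝ (g ⟨k, hk⟩)
              ((Ahat ⟨k, hk⟩ * iterFlowParam Ahat g k (Nat.le_of_lt hk) X) i)).toLinearMap|
    else 1 with hterm'
  have aux : ∀ j (h : j ≤ T),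
      ∃ L : Matrix (Fin n) (Fin D) ℝ →L[ℝ] Matrix (Fin n) (Fin D) ℝ,
        HasFDerivAt (iterFlowParam Ahat g j h) L X ∧
          |LinearMap.det L.toLinearMap| = ∏ k ∈ Finset.range j, term' k := by
    intro j
    induction j with
    | zero =>
      intro h
      refine ⟨ContinuousLinearMap.id ℝ _, hasFDerivAt_id X, by simp⟩
    | succ j ih =>
      intro h
      obtain ⟨L, hL, hLdet⟩ := ih (Nat.le_of_succ_le h)
      have hjT : j < T := h
      obtain ⟨M, hM, hMdet⟩ :=
        step_lemma (Ahat ⟨j, hjT⟩) (g ⟨j, hjT⟩) (hg ⟨j, hjT⟩)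
          (iterFlowParam Ahat g j (Nat.le_of_succ_le h) X)
      refine ⟨M.comp L, ?_, ?_⟩
      · exact hM.comp X hL
      · have hco : (M.comp L).toLinearMap = M.toLinearMap ∘ₗ L.toLinearMap := rfl
        rw [hco, LinearMap.det_comp, abs_mul, hLdet, hMdet, Finset.prod_range_succ]
        rw [hterm']
        simp only [hjT, dif_pos]
        ring
  obtain ⟨L, hL, hdet⟩ := aux T le_rfl
  refine ⟨hL.differentiableAt, ?_⟩
  rw [hL.fderiv, hdet, ← Fin.prod_univ_eq_prod_range term' T]
  refine Finset.prod_congr rfl fun j _ => ?_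
  rw [hterm']
  simp only [j.isLt, dif_pos]
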